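/- Let t ≥ 1 be an integer and let B be the blown-up 5-cycle: the graph with vertex set (ℤ/5ℤ) × {1, …, t} in which (i, a) and (j, b) are adjacent if and only if j − i ≡ 1 or −1 (mod 5). Then B is triangle-free, B has maximum degree 2t, and the strong clique number of B satisfies ω₂'(B) = 5t² (in particular its entire edge set is a strong clique). -/

import Mathlib

open SimpleGraph

/-- `G.ContainsSub H` means `G` contains a copy of `H` as a (not necessarily induced)
subgraph, i.e. there is an injective graph homomorphism from `H` to `G`. -/
def SimpleGraph.ContainsSub {V W : Type*} (G : SimpleGraph V) (H : SimpleGraph W) : Prop :=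
  ∃ f : W → V, Function.Injective f ∧ ∀ a b, H.Adj a b → G.Adj (f a) (f b)

/-- A strong clique of `G`: a set of edges of `G` any two distinct members of which
either share an endpoint or have endpoints joined by an edge of `G`. -/
def SimpleGraph.IsStrongClique {V : Type*} (G : SimpleGraph V) (F : Finset (Sym2 V)) : Prop :=
  (F : Set (Sym2 V)) ⊆ G.edgeSet ∧
    ∀ e ∈ F, ∀ f ∈ F, e ≠ f → ∃ x ∈ e, ∃ y ∈ f, x = y ∨ G.Adj x y

/-- The strong clique number `ω₂'(G)`: the largest cardinality of a strong clique. -/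
noncomputable def SimpleGraph.strongCliqueNumber {V : Type*} (G : SimpleGraph V) : ℕ :=
  sSup {n | ∃ F : Finset (Sym2 V), G.IsStrongClique F ∧ F.card = n}

/-- The blown-up `5`-cycle: vertex set `(ℤ/5ℤ) × {1, …, t}` with `(i, a)` adjacent to
`(j, b)` iff `j - i ≡ ±1 (mod 5)`. -/
def blownUpC5 (t : ℕ) : SimpleGraph (ZMod 5 × Fin t) where
  Adj p q := q.1 - p.1 = 1 ∨ q.1 - p.1 = -1
  symm := by
    constructor
    intro p q h
    rcases h with h | h
    · right; rw [← neg_sub, h]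
    · left; rw [← neg_sub, h, neg_neg]
  loopless := by
    constructor
    intro p h
    rw [sub_self] at h
    revert h
    decide

instance (t : ℕ) : DecidableRel (blownUpC5 t).Adj := fun p q =>
  inferInstanceAs (Decidable (q.1 - p.1 = 1 ∨ q.1 - p.1 = -1))


lemma blownUpC5_neighborFinset (t : ℕ) (p : ZMod 5 × Fin t) :
    (blownUpC5 t).neighborFinset p = ({p.1+1, p.1-1} : Finset (ZMod 5)) ×ˢ Finset.univ := by
  ext q
  simp only [SimpleGraph.mem_neighborFinset, Finset.mem_product, Finset.mem_insert,
    Finset.mem_singleton, Finset.mem_univ, and_true]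
  constructor
  · rintro (h | h)
    · left; linear_combination h
    · right; linear_combination h
  · rintro (h | h)
    · left; linear_combination h
    · right; linear_combination h

lemma blownUpC5_degree (t : ℕ) (p : ZMod 5 × Fin t) :
    (blownUpC5 t).degree p = 2 * t := by
  rw [SimpleGraph.degree, blownUpC5_neighborFinset, Finset.card_product,
    Finset.card_univ, Fintype.card_fin]
  congr 1
  rw [Finset.card_insert_of_notMem, Finset.card_singleton]
  simp only [Finset.mem_singleton]
  intro h
  have h2 : (2 : ZMod 5) = 0 := by linear_combination h
  revert h2; decide

lemma blownUpC5_card_edges (t : ℕ) :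
    (blownUpC5 t).edgeFinset.card = 5 * t ^ 2 := by
  have h := SimpleGraph.sum_degrees_eq_twice_card_edges (blownUpC5 t)
  simp only [blownUpC5_degree, Finset.sum_const, Finset.card_univ, smul_eq_mul] at h
  have hc : Fintype.card (ZMod 5 × Fin t) = 5 * t := by
    simp [Fintype.card_prod]
  rw [hc] at h
  have h2 : 2 * (blownUpC5 t).edgeFinset.card = 2 * (5 * t ^ 2) := by rw [← h]; ring
  exact Nat.eq_of_mul_eq_mul_left (by norm_num) h2

lemma blownUpC5_isStrongClique (t : ℕ) :
    (blownUpC5 t).IsStrongClique (blownUpC5 t).edgeFinset := by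
  constructor
  · intro e he
    rwa [Finset.mem_coe, SimpleGraph.mem_edgeFinset] at he
  · intro e he f hf hne
    rw [SimpleGraph.mem_edgeFinset] at he hf
    induction e using Sym2.ind with
    | _ p q =>
    induction f using Sym2.ind with
    | _ r s =>
    rw [SimpleGraph.mem_edgeSet] at he hf
    have key : ∀ a b c d : ZMod 5, (b-a=1∨b-a=-1) → (d-c=1∨d-c=-1) →
        ((c-a=1∨c-a=-1) ∨ (d-a=1∨d-a=-1) ∨ (c-b=1∨c-b=-1) ∨ (d-b=1∨d-b=-1)) := by decide
    rcases key p.1 q.1 r.1 s.1 he hf with h | h | h | h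
    · exact ⟨p, Sym2.mem_mk_left _ _, r, Sym2.mem_mk_left _ _, Or.inr h⟩
    · exact ⟨p, Sym2.mem_mk_left _ _, s, Sym2.mem_mk_right _ _, Or.inr h⟩
    · exact ⟨q, Sym2.mem_mk_right _ _, r, Sym2.mem_mk_left _ _, Or.inr h⟩
    · exact ⟨q, Sym2.mem_mk_right _ _, s, Sym2.mem_mk_right _ _, Or.inr h⟩

/-- The blown-up `5`-cycle is triangle-free, has maximum degree `2t`, its whole edge
set is a strong clique, and its strong clique number is `5t²`. -/
theorem blownUpC5_strongCliqueNumber (t : ℕ) (ht : 1 ≤ t) :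
    ¬ (blownUpC5 t).ContainsSub (cycleGraph 3) ∧
    (blownUpC5 t).maxDegree = 2 * t ∧
    (blownUpC5 t).IsStrongClique (blownUpC5 t).edgeFinset ∧
    (blownUpC5 t).strongCliqueNumber = 5 * t ^ 2 := by
  refine ⟨?_, ?_, blownUpC5_isStrongClique t, ?_⟩
  · rintro ⟨f, hinj, hadj⟩
    have h01 : (cycleGraph 3).Adj 0 1 := by decide
    have h12 : (cycleGraph 3).Adj 1 2 := by decide
    have h02 : (cycleGraph 3).Adj 0 2 := by decide
    have a01 := hadj 0 1 h01
    have a12 := hadj 1 2 h12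
    have a02 := hadj 0 2 h02
    have key : ∀ a b c : ZMod 5, (b-a=1∨b-a=-1) → (c-b=1∨c-b=-1) → ¬(c-a=1∨c-a=-1) := by
      decide
    exact key (f 0).1 (f 1).1 (f 2).1 a01 a12 a02
  · have hne : (Finset.univ : Finset (ZMod 5 × Fin t)).Nonempty := by
      refine ⟨(0, ⟨0, ht⟩), Finset.mem_univ _⟩
    apply le_antisymm
    · apply SimpleGraph.maxDegree_le_of_forall_degree_le
      intro v
      rw [blownUpC5_degree]
    · obtain ⟨v, -⟩ := hne
      rw [← blownUpC5_degree t v]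
      exact SimpleGraph.degree_le_maxDegree _ v
  · have hmem : 5 * t ^ 2 ∈ {n | ∃ F : Finset (Sym2 (ZMod 5 × Fin t)),
        (blownUpC5 t).IsStrongClique F ∧ F.card = n} :=
      ⟨(blownUpC5 t).edgeFinset, blownUpC5_isStrongClique t, blownUpC5_card_edges t⟩
    have hub : ∀ n ∈ {n | ∃ F : Finset (Sym2 (ZMod 5 × Fin t)),
        (blownUpC5 t).IsStrongClique F ∧ F.card = n}, n ≤ 5 * t ^ 2 := by
      rintro n ⟨F, ⟨hsub, -⟩, rfl⟩
      rw [← blownUpC5_card_edges t]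
      apply Finset.card_le_card
      intro e he
      rw [SimpleGraph.mem_edgeFinset]
      exact hsub he
    exact IsGreatest.csSup_eq ⟨hmem, hub⟩
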